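/- Let r ≥ 2 and B = BHH(m,r,1) in R = k[a_j, c, x_{i,j}]. Then for all i ∈ [m], j ∈ [r] (indices mod r): x_{i,j+2}^2 * a_j^4 * a_{j+1}^4 * h_{i,j} ∈ B^2, where h_{i,j} = a_j^4 x_{i,j} x_{i,j+1}^2. -/

import Mathlib

open MvPolynomial

/-- Variables of the ring `k[a_1, …, a_r, c, x_{i,j} : i ∈ [m], j ∈ [r]]`. -/
abbrev Var (m r : ℕ) := Fin r ⊕ Unit ⊕ (Fin m × Fin r)

/-- The variable `a_j`. -/
noncomputable def va {k : Type*} [Field k] (m r : ℕ) (j : Fin r) :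
    MvPolynomial (Var m r) k := X (Sum.inl j)

/-- The variable `c`. -/
noncomputable def vc {k : Type*} [Field k] (m r : ℕ) :
    MvPolynomial (Var m r) k := X (Sum.inr (Sum.inl ()))

/-- The variable `x_{i,j}`. -/
noncomputable def vx {k : Type*} [Field k] (m r : ℕ) (i : Fin m) (j : Fin r) :
    MvPolynomial (Var m r) k := X (Sum.inr (Sum.inr (i, j)))

/-- `h_{i,j} = a_j^4 x_{i,j} x_{i,j+1}^2` (second index cyclic mod `r`). -/
noncomputable def hgen {k : Type*} [Field k] (m r : ℕ) [NeZero r] (i : Fin m) (j : Fin r) :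
    MvPolynomial (Var m r) k :=
  va m r j ^ 4 * vx m r i j * vx m r i (j + 1) ^ 2

/-- The ideal `BHH(m,r,1) = (a_j^6, a_j^5 a_{j+1} : j) + (c a_1^4 ⋯ a_r^4)
  + (a_j^4 x_{i,j} x_{i,j+1}^2 : i, j)`, indices cyclic mod `r`. -/
noncomputable def BHH {k : Type*} [Field k] (m r : ℕ) [NeZero r] :
    Ideal (MvPolynomial (Var m r) k) :=
  Ideal.span
    ((Set.range fun j : Fin r => va m r j ^ 6) ∪
      (Set.range fun j : Fin r => va m r j ^ 5 * va m r (j + 1)) ∪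
      {vc m r * ∏ j : Fin r, va m r j ^ 4} ∪
      (Set.range fun p : Fin m × Fin r => hgen m r p.1 p.2))

theorem stmt12 {k : Type*} [Field k] (m r : ℕ) (hm : 1 ≤ m) (i : Fin m) (j : Fin (r + 2)) :
    vx (k := k) m (r + 2) i (j + 2) ^ 2 * va m (r + 2) j ^ 4 * va m (r + 2) (j + 1) ^ 4 *
        hgen m (r + 2) i j
      ∈ (BHH (k := k) m (r + 2)) ^ 2 := by
  have h1 : va (k := k) m (r + 2) j ^ 6 ∈ BHH (k := k) m (r + 2) :=
    Ideal.subset_span (Or.inl (Or.inl (Or.inl ⟨j, rfl⟩)))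
  have h2 : hgen (k := k) m (r + 2) i (j + 1) ∈ BHH (k := k) m (r + 2) :=
    Ideal.subset_span (Or.inr ⟨(i, j + 1), rfl⟩)
  have key :
      vx (k := k) m (r + 2) i (j + 2) ^ 2 * va m (r + 2) j ^ 4 * va m (r + 2) (j + 1) ^ 4 *
          hgen m (r + 2) i j
        = (va m (r + 2) j ^ 2 * vx m (r + 2) i j * vx m (r + 2) i (j + 1) *
            va m (r + 2) j ^ 6) * hgen m (r + 2) i (j + 1) := by
    have hjj : (j + 1) + 1 = j + 2 := by rw [add_assoc]; rfl
    simp only [hgen, hjj]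
    ring
  rw [key, pow_two]
  exact Ideal.mul_mem_mul (Ideal.mul_mem_left _ _ h1) h2
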